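/- Let U ∈ R^{n×m} have unit columns positively spanning R^n, and let S be a subset of columns with 1 ≤ rank(S) ≤ n-1, S = U ∩ span(S) (a flat), such that span(S) ∩ span(U \ S) ≠ {0}. Then there exists a basis B ∈ B(U) with |S ∩ B| < rank(S). Consequently, for every γ in the relative interior of (1/n)P(M_U) one has Σ_{u_i ∈ S} γ_i < rank(S)/n. -/

import Mathlib

open MeasureTheory Module Submodule
open scoped RealInnerProductSpace Pointwise

def IsBasisIndex {n m : ℕ} (U : Fin m → EuclideanSpace ℝ (Fin n)) (I : Finset (Fin m)) : Prop :=
  I.card = n ∧ Submodule.span ℝ (U '' ↑I) = ⊤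

noncomputable def matroidPolytope {n m : ℕ} (U : Fin m → EuclideanSpace ℝ (Fin n)) :
    Set (Fin m → ℝ) :=
  convexHull ℝ {x | ∃ I : Finset (Fin m), IsBasisIndex U I ∧
    x = fun j => if j ∈ I then (1 : ℝ) else 0}

def PosSpanning {n m : ℕ} (U : Fin m → EuclideanSpace ℝ (Fin n)) : Prop :=
  ∀ x : EuclideanSpace ℝ (Fin n),
    ∃ c : Fin m → ℝ, (∀ i, 0 ≤ c i) ∧ x = ∑ i, c i • U i


private lemma relint_strict {E : Type*} [NormedAddCommGroup E] [NormedSpace ℝ E]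
    (s : Set E) (f : E →ₗ[ℝ] ℝ) (c : ℝ)
    (hle : ∀ x ∈ s, f x ≤ c) {p : E} (hp : p ∈ s) (hpc : f p < c)
    {γ : E} (hγ : γ ∈ intrinsicInterior ℝ s) : f γ < c := by
  obtain ⟨x, hx, rfl⟩ := mem_intrinsicInterior.mp hγ
  by_contra hge
  push_neg at hge
  have hpmem : p ∈ affineSpan ℝ s := subset_affineSpan ℝ s hp
  have hmem : ∀ t : ℝ, AffineMap.lineMap p (↑x : E) t ∈ affineSpan ℝ s :=
    fun t => AffineMap.lineMap_mem t hpmem x.2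
  set g : ℝ → affineSpan ℝ s := fun t => ⟨AffineMap.lineMap p (↑x : E) t, hmem t⟩ with hg
  have hgc : Continuous g :=
    Continuous.subtype_mk (AffineMap.lineMap_continuous) _
  have h1 : g 1 = x := by
    ext
    simp [g]
  have hopen : IsOpen (g ⁻¹' interior (((↑) : affineSpan ℝ s → E) ⁻¹' s)) :=
    isOpen_interior.preimage hgc
  have h1mem : (1:ℝ) ∈ g ⁻¹' interior (((↑) : affineSpan ℝ s → E) ⁻¹' s) := by
    rw [Set.mem_preimage, h1]; exact hx
  obtain ⟨ε, hε, hball⟩ := Metric.isOpen_iff.mp hopen 1 h1mem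
  have htmem : (1 + ε/2) ∈ Metric.ball (1:ℝ) ε := by
    simp only [Metric.mem_ball, Real.dist_eq]
    rw [show (1 + ε/2 - 1 : ℝ) = ε/2 by ring, abs_of_pos (by linarith)]
    linarith
  have hts : (AffineMap.lineMap p (↑x : E) (1 + ε/2)) ∈ s := by
    have := interior_subset (hball htmem)
    exact this
  have hfle := hle _ hts
  rw [AffineMap.lineMap_apply_module] at hfle
  simp only [map_add, _root_.map_smul, map_sub, smul_eq_mul] at hfle
  nlinarith

private lemma card_inter_le_rank {n m : ℕ} (U : Fin m → EuclideanSpace ℝ (Fin n))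
    (hinj : Function.Injective U) (S B : Finset (Fin m)) (hB : (B.card = n ∧ Submodule.span ℝ (U '' ↑B) = ⊤)) :
    (S ∩ B).card ≤ finrank ℝ (Submodule.span ℝ (U '' ↑S)) := by
  classical
  obtain ⟨hcard, hspan⟩ := hB
  -- the image finset of B is linearly independent
  have hindepB : LinearIndependent ℝ ((↑) : ((B.image U : Finset _) : Set (EuclideanSpace ℝ (Fin n))) → EuclideanSpace ℝ (Fin n)) := by
    apply linearIndependent_of_top_le_span_of_card_eq_finrank
    · rw [Subtype.range_coe, Finset.coe_image, hspan]
    · rw [show Fintype.card {x // x ∈ ((B.image U : Finset _) : Set (EuclideanSpace ℝ (Fin n)))} =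
          (B.image U).card from Fintype.card_coe _,
        Finset.card_image_of_injective _ hinj, hcard, finrank_euclideanSpace_fin]
  have hsub : (((S ∩ B).image U : Finset _) : Set (EuclideanSpace ℝ (Fin n))) ⊆
      ((B.image U : Finset _) : Set (EuclideanSpace ℝ (Fin n))) := by
    simp only [Finset.coe_image]
    exact Set.image_mono (Finset.coe_subset.mpr Finset.inter_subset_right)
  have hindep := LinearIndepOn.mono (v := id) hindepB hsub
  have h2 := finrank_span_finset_eq_card hindep
  have h1 : ((S ∩ B).image U).card = (S ∩ B).card := Finset.card_image_of_injective _ hinj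
  have h3 : Submodule.span ℝ (((S ∩ B).image U : Finset _) : Set (EuclideanSpace ℝ (Fin n))) ≤
      Submodule.span ℝ (U '' ↑S) := by
    rw [Finset.coe_image]
    exact Submodule.span_mono (Set.image_mono (Finset.coe_subset.mpr Finset.inter_subset_left))
  have h4 := Submodule.finrank_mono h3
  omega

/-- if `S` is a flat of rank `1 ≤ rk(S) ≤ n-1` which is not a separator
(`span S ∩ span (U∖S) ≠ 0`), then some basis `B` of `U` meets `S` in fewer than `rank S`
elements; consequently every `γ` in the relative interior of `(1/n)·P(M_U)` satisfies
`∑_{i ∈ S} γᵢ < rank(S)/n`. -/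
theorem stmt_4 (n m : ℕ) (hn : 0 < n) (U : Fin m → EuclideanSpace ℝ (Fin n))
    (hunit : ∀ i, ‖U i‖ = 1) (hpos : PosSpanning U) (hinj : Function.Injective U)
    (S : Finset (Fin m))
    (hr1 : 1 ≤ finrank ℝ (Submodule.span ℝ (U '' ↑S)))
    (hr2 : finrank ℝ (Submodule.span ℝ (U '' ↑S)) ≤ n - 1)
    (hflat : ∀ i, U i ∈ Submodule.span ℝ (U '' ↑S) → i ∈ S)
    (hnonsep : Submodule.span ℝ (U '' ↑S) ⊓ Submodule.span ℝ (U '' ↑Sᶜ) ≠ ⊥) :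
    (∃ B : Finset (Fin m), IsBasisIndex U B ∧
        (S ∩ B).card < finrank ℝ (Submodule.span ℝ (U '' ↑S))) ∧
      ∀ γ ∈ intrinsicInterior ℝ ((n : ℝ)⁻¹ • matroidPolytope U),
        ∑ i ∈ S, γ i < (finrank ℝ (Submodule.span ℝ (U '' ↑S)) : ℝ) / n := by
  classical
  set r := finrank ℝ (Submodule.span ℝ (U '' ↑S)) with hrdef
  -- the columns span everything
  have hspanU : Submodule.span ℝ (Set.range U) = ⊤ := by
    rw [eq_top_iff]
    intro x _
    obtain ⟨c, _, hx⟩ := hpos x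
    rw [hx]
    exact Submodule.sum_mem _ fun i _ =>
      Submodule.smul_mem _ _ (Submodule.subset_span (Set.mem_range_self i))
  have hsup : Submodule.span ℝ (U '' ↑S) ⊔ Submodule.span ℝ (U '' ↑Sᶜ) = ⊤ := by
    rw [← Submodule.span_union, ← Set.image_union]
    have hU : ((↑S : Set (Fin m)) ∪ ↑Sᶜ) = Set.univ := by
      rw [Finset.coe_compl]; exact Set.union_compl_self _
    rw [hU, Set.image_univ, hspanU]
  have hinfpos : 1 ≤ finrank ℝ
      ↥(Submodule.span ℝ (U '' ↑S) ⊓ Submodule.span ℝ (U '' ↑Sᶜ)) :=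
    Submodule.one_le_finrank_iff.mpr hnonsep
  have hdim := Submodule.finrank_sup_add_finrank_inf_eq
    (Submodule.span ℝ (U '' ↑S)) (Submodule.span ℝ (U '' ↑Sᶜ))
  rw [hsup, finrank_top, finrank_euclideanSpace_fin] at hdim
  -- independent subset of the complement columns spanning their span
  obtain ⟨tset, hts, htspan, htindep⟩ := exists_linearIndependent ℝ (U '' (↑Sᶜ : Set (Fin m)))
  have htfin : tset.Finite := ((Sᶜ : Finset (Fin m)).finite_toSet.image U).subset hts
  have htindep' : LinearIndependent ℝ (fun x : (htfin.toFinset : Set (EuclideanSpace ℝ (Fin n))) => (x : EuclideanSpace ℝ (Fin n))) := by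
    rw [htfin.coe_toFinset]; exact htindep
  have htcard : htfin.toFinset.card = finrank ℝ (Submodule.span ℝ (U '' ↑Sᶜ)) := by
    have h := finrank_span_finset_eq_card htindep'
    rw [htfin.coe_toFinset, htspan] at h
    omega
  -- extend to a basis inside the columns
  have hsub' : tset ⊆ Set.range U := hts.trans (Set.image_subset_range _ _)
  set b := LinearIndepOn.extend (v := id) htindep hsub' with hbdef
  have hbsub : b ⊆ Set.range U := LinearIndepOn.extend_subset (v := id) htindep hsub'
  have htb : tset ⊆ b := LinearIndepOn.subset_extend (v := id) htindep hsub'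
  have hbindep : LinearIndependent ℝ ((↑) : b → EuclideanSpace ℝ (Fin n)) :=
    LinearIndepOn.linearIndepOn_extend (v := id) htindep hsub'
  have hbspan : Submodule.span ℝ b = ⊤ := by
    rw [eq_top_iff, ← hspanU]
    exact Submodule.span_le.mpr (LinearIndepOn.subset_span_extend htindep hsub')
  have hbfin : b.Finite := (Set.finite_range U).subset hbsub
  have hbindep' : LinearIndependent ℝ (fun x : (hbfin.toFinset : Set (EuclideanSpace ℝ (Fin n))) => (x : EuclideanSpace ℝ (Fin n))) := by
    rw [hbfin.coe_toFinset]; exact hbindep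
  set B : Finset (Fin m) := Finset.univ.filter (fun i => U i ∈ b) with hBdef
  have hUB : U '' ↑B = b := by
    apply Set.Subset.antisymm
    · rintro _ ⟨i, hi, rfl⟩
      simp only [hBdef, Finset.coe_filter, Set.mem_setOf_eq, Finset.mem_univ, true_and] at hi
      exact hi
    · intro v hv
      obtain ⟨i, rfl⟩ := hbsub hv
      exact ⟨i, by simp [hBdef, hv], rfl⟩
  have hBcard : B.card = n := by
    have h1 : (B.image U).card = B.card := Finset.card_image_of_injective _ hinj
    have h2 : B.image U = hbfin.toFinset :=
      Finset.coe_injective (by rw [Finset.coe_image, hUB, hbfin.coe_toFinset])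
    have h2' : (B.image U).card = hbfin.toFinset.card := by rw [h2]
    have h3 := finrank_span_finset_eq_card hbindep'
    rw [hbfin.coe_toFinset, hbspan, finrank_top, finrank_euclideanSpace_fin] at h3
    omega
  have hBbasis : IsBasisIndex U B := ⟨hBcard, by rw [hUB, hbspan]⟩
  -- indices of tset
  set T : Finset (Fin m) := Finset.univ.filter (fun i => U i ∈ tset) with hTdef
  have hTB : T ⊆ Sᶜ ∩ B := by
    intro i hi
    simp only [hTdef, Finset.mem_filter, Finset.mem_univ, true_and] at hi
    refine Finset.mem_inter.mpr ⟨?_, by simp [hBdef, htb hi]⟩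
    obtain ⟨j, hj, hji⟩ := hts hi
    rwa [← hinj hji]
  have hUT : U '' ↑T = tset := by
    apply Set.Subset.antisymm
    · rintro _ ⟨i, hi, rfl⟩
      simp only [hTdef, Finset.coe_filter, Set.mem_setOf_eq, Finset.mem_univ, true_and] at hi
      exact hi
    · intro v hv
      obtain ⟨i, rfl⟩ := hsub' hv
      exact ⟨i, by simp [hTdef, hv], rfl⟩
  have hTcard : T.card = htfin.toFinset.card := by
    have h1 : (T.image U).card = T.card := Finset.card_image_of_injective _ hinj
    have h2 : T.image U = htfin.toFinset :=
      Finset.coe_injective (by rw [Finset.coe_image, hUT, htfin.coe_toFinset])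
    have h2' : (T.image U).card = htfin.toFinset.card := by rw [h2]
    omega
  -- counting
  have hsplit : (S ∩ B).card + (Sᶜ ∩ B).card = B.card := by
    rw [← Finset.card_union_of_disjoint]
    · congr 1
      ext i
      simp only [Finset.mem_union, Finset.mem_inter, Finset.mem_compl]
      tauto
    · simp only [Finset.disjoint_left, Finset.mem_inter, Finset.mem_compl]
      tauto
  have hTle : T.card ≤ (Sᶜ ∩ B).card := Finset.card_le_card hTB
  have hltB : (S ∩ B).card < r := by omega
  refine ⟨⟨B, hBbasis, hltB⟩, ?_⟩
  -- Part 2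
  intro γ hγ
  set f : (Fin m → ℝ) →ₗ[ℝ] ℝ := ∑ i ∈ S, LinearMap.proj i with hfdef
  have hfapp : ∀ x : Fin m → ℝ, f x = ∑ i ∈ S, x i := by
    intro x
    simp [hfdef, LinearMap.sum_apply, LinearMap.proj_apply]
  have hPle : ∀ y ∈ matroidPolytope U, f y ≤ (r : ℝ) := by
    intro y hy
    have hconv : Convex ℝ {w : Fin m → ℝ | f w ≤ (r : ℝ)} :=
      convex_halfSpace_le f.isLinear (r : ℝ)
    refine convexHull_min ?_ hconv hy
    rintro _ ⟨I, hI, rfl⟩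
    have : f (fun j => if j ∈ I then (1:ℝ) else 0) = ((S ∩ I).card : ℝ) := by
      rw [hfapp]
      rw [Finset.sum_boole, Finset.filter_mem_eq_inter]
    rw [Set.mem_setOf_eq, this]
    exact_mod_cast card_inter_le_rank U hinj S I hI
  have hle : ∀ x ∈ (n : ℝ)⁻¹ • matroidPolytope U, f x ≤ (r : ℝ) / n := by
    rintro _ ⟨y, hy, rfl⟩
    rw [_root_.map_smul, smul_eq_mul, div_eq_inv_mul]
    have := hPle y hy
    have hn' : (0:ℝ) < (n:ℝ)⁻¹ := by positivity
    nlinarith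
  set p : Fin m → ℝ := (n : ℝ)⁻¹ • (fun j => if j ∈ B then (1:ℝ) else 0) with hpdef
  have hpmem : p ∈ (n : ℝ)⁻¹ • matroidPolytope U :=
    Set.smul_mem_smul_set (subset_convexHull _ _ ⟨B, hBbasis, rfl⟩)
  have hpval : f p < (r : ℝ) / n := by
    rw [hpdef, _root_.map_smul, smul_eq_mul, hfapp, Finset.sum_boole,
      Finset.filter_mem_eq_inter, div_eq_inv_mul]
    have hn' : (0:ℝ) < (n:ℝ)⁻¹ := by positivity
    have : ((S ∩ B).card : ℝ) < (r : ℝ) := by exact_mod_cast hltB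
    nlinarith
  have := relint_strict _ f ((r : ℝ) / n) hle hpmem hpval hγ
  rwa [hfapp] at this
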